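/- Let G be a finite simple graph and let u and v be coduplicate vertices of G (distinct vertices with N[u] = N[v]). Then mult(−1, G) = mult(−1, G − v) + 1, where G − v is the induced subgraph obtained by deleting v. -/
import Mathlib


/-- The multiplicity of `μ` as an eigenvalue of `G`: the dimension of
the kernel of `A(G) - μ I`. -/
noncomputable def SimpleGraph.eigMult {V : Type*} [Fintype V] (G : SimpleGraph V) (μ : ℝ) : ℕ :=
  letI := Classical.decEq V
  letI : DecidableRel G.Adj := Classical.decRel _
  Module.finrank ℝ (LinearMap.ker (Matrix.toLin' (G.adjMatrix ℝ - μ • (1 : Matrix V V ℝ))))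

private lemma eigMult_eq_aux {V : Type*} [Fintype V] (G : SimpleGraph V) (μ : ℝ)
    [d1 : DecidableEq V] [d2 : DecidableRel G.Adj] :
    G.eigMult μ =
      Module.finrank ℝ (LinearMap.ker (Matrix.toLin'
        (G.adjMatrix ℝ - μ • (1 : Matrix V V ℝ)))) := by
  rw [Subsingleton.elim d1 (Classical.decEq V), Subsingleton.elim d2 (Classical.decRel _)]
  rfl

open Matrix in
private lemma finrank_ker_delete {V : Type*} [Fintype V] [DecidableEq V]
    (M : Matrix V V ℝ) (u v : V) (huv : u ≠ v) (S : Set V) [Fintype S] [DecidableEq S]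
    (hS : ∀ w, w ∈ S ↔ w ≠ v)
    (hsym : ∀ i j, M i j = M j i) (hrow : ∀ w, M u w = M v w) :
    Module.finrank ℝ (LinearMap.ker (Matrix.toLin' M)) =
      Module.finrank ℝ (LinearMap.ker (Matrix.toLin'
        (M.submatrix (Subtype.val : {x // x ∈ S} → V) (Subtype.val : {x // x ∈ S} → V)))) + 1 := by
  classical
  set M' : Matrix S S ℝ := M.submatrix Subtype.val Subtype.val with hM'
  have hvS : v ∉ S := fun h => (hS v).1 h rfl
  have huS : u ∈ S := (hS u).2 huv
  have hcol : ∀ w, M w u = M w v := fun w => by rw [hsym w u, hrow, hsym]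
  set d : V → ℝ := Pi.single u 1 - Pi.single v 1 with hd
  have hdv : d v = -1 := by
    simp [hd, Pi.single_apply, huv, (Ne.symm huv)]
  have hMd : M *ᵥ d = 0 := by
    rw [hd, Matrix.mulVec_sub, Matrix.mulVec_single_one, Matrix.mulVec_single_one]
    funext w
    simp [Matrix.transpose_apply, hcol w]
  -- splitting a sum over `V` into the `v` term and a sum over `S`
  have hsum : ∀ (f : V → ℝ), ∑ w, f w = f v + ∑ w : S, f ↑w := by
    intro f
    rw [Fintype.sum_eq_add_sum_compl v f]
    congr 1
    exact Finset.sum_subtype _ (fun x => by simp [hS x]) f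
  -- mulVec of the submatrix versus mulVec of M, for vectors vanishing at v
  have hmul : ∀ (x : V → ℝ), x v = 0 → ∀ w : S, (M *ᵥ x) ↑w = (M' *ᵥ (fun a : S => x ↑a)) w := by
    intro x hx w
    show ∑ a, M ↑w a * x a = ∑ a : S, M' w a * x ↑a
    rw [hsum (fun a => M ↑w a * x a)]
    simp [hx, hM', Matrix.submatrix_apply]
  -- extension by zero
  set ext0 : (S → ℝ) → (V → ℝ) := fun y w => if h : w ∈ S then y ⟨w, h⟩ else 0 with hext0
  have hext_res : ∀ (y : S → ℝ), (fun a : S => ext0 y ↑a) = y := by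
    intro y; funext a; simp [hext0, a.2]
  have hextv : ∀ (y : S → ℝ), ext0 y v = 0 := by intro y; simp [hext0, hvS]
  have hker_ext : ∀ (y : S → ℝ), M' *ᵥ y = 0 → M *ᵥ ext0 y = 0 := by
    intro y hy
    have hws : ∀ w : S, (M *ᵥ ext0 y) ↑w = 0 := by
      intro w
      rw [hmul (ext0 y) (hextv y) w, hext_res, hy]
      rfl
    funext w
    by_cases hw : w ∈ S
    · exact hws ⟨w, hw⟩
    · have hwv : w = v := not_not.mp (fun h => hw ((hS w).2 h))
      subst hwv
      have : (M *ᵥ ext0 y) w = (M *ᵥ ext0 y) u := by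
        show ∑ a, M w a * ext0 y a = ∑ a, M u a * ext0 y a
        exact Finset.sum_congr rfl (fun a _ => by rw [hrow a])
      rw [this] at *
      simpa using hws ⟨u, huS⟩
  have hker_res : ∀ (x : V → ℝ), M *ᵥ x = 0 → x v = 0 →
      M' *ᵥ (fun a : S => x ↑a) = 0 := by
    intro x hx hxv
    funext w
    rw [← hmul x hxv w, hx]
    rfl
  have hx1v : ∀ (x : V → ℝ), (x + x v • d) v = 0 := by
    intro x; simp [hdv]
  have hx1ker : ∀ (x : V → ℝ), M *ᵥ x = 0 → M *ᵥ (x + x v • d) = 0 := by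
    intro x hx
    rw [Matrix.mulVec_add, Matrix.mulVec_smul, hx, hMd]
    simp
  have memK : ∀ (x : V → ℝ), x ∈ LinearMap.ker (Matrix.toLin' M) ↔ M *ᵥ x = 0 := by
    intro x; rw [LinearMap.mem_ker, Matrix.toLin'_apply]
  have memK' : ∀ (y : S → ℝ), y ∈ LinearMap.ker (Matrix.toLin' M') ↔ M' *ᵥ y = 0 := by
    intro y; rw [LinearMap.mem_ker, Matrix.toLin'_apply]
  -- build the linear equivalence ker M ≃ ker M' × ℝ
  let e : (LinearMap.ker (Matrix.toLin' M)) ≃ₗ[ℝ]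
      (LinearMap.ker (Matrix.toLin' M')) × ℝ :=
  { toFun := fun x =>
      (⟨fun a : S => ((x : V → ℝ) + (x : V → ℝ) v • d) ↑a,
        (memK' _).2 (hker_res _ (hx1ker _ ((memK _).1 x.2)) (hx1v _))⟩, (x : V → ℝ) v)
    map_add' := by
      intro x y
      refine Prod.ext (Subtype.ext (funext fun a => ?_)) rfl
      simp only [Prod.fst_add, Submodule.coe_add, Pi.add_apply, Pi.smul_apply, smul_eq_mul]
      ring
    map_smul' := by
      intro c x
      refine Prod.ext (Subtype.ext (funext fun a => ?_)) rfl
      simp only [Prod.smul_fst, Submodule.coe_smul, Pi.add_apply, Pi.smul_apply, smul_eq_mul,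
        RingHom.id_apply]
      ring
    invFun := fun p =>
      ⟨fun w => ext0 (p.1 : S → ℝ) w - p.2 * d w, by
        rw [memK]
        have h1 : (fun w => ext0 (p.1 : S → ℝ) w - p.2 * d w)
            = ext0 (p.1 : S → ℝ) - p.2 • d := by funext w; simp
        rw [h1, Matrix.mulVec_sub, Matrix.mulVec_smul, hMd,
          hker_ext _ ((memK' _).1 p.1.2)]
        simp⟩
    left_inv := by
      intro x
      apply Subtype.ext
      funext w
      show ext0 (fun a : S => ((x : V → ℝ) + (x : V → ℝ) v • d) ↑a) w
          - (x : V → ℝ) v * d w = (x : V → ℝ) w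
      by_cases hw : w ∈ S
      · simp only [hext0, dif_pos hw, Pi.add_apply, Pi.smul_apply, smul_eq_mul]
        ring
      · have hwv : w = v := not_not.mp (fun h => hw ((hS w).2 h))
        subst hwv
        simp only [hext0, dif_neg hw, hdv]
        have := hx1v (x : V → ℝ)
        simp only [Pi.add_apply, Pi.smul_apply, smul_eq_mul, hdv] at this
        linarith
    right_inv := by
      intro p
      have hxv : (fun w => ext0 (p.1 : S → ℝ) w - p.2 * d w) v = p.2 := by
        simp [hextv, hdv]
      refine Prod.ext (Subtype.ext (funext fun a => ?_)) hxv
      show ((fun w => ext0 (p.1 : S → ℝ) w - p.2 * d w)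
          + (fun w => ext0 (p.1 : S → ℝ) w - p.2 * d w) v • d) ↑a = (p.1 : S → ℝ) a
      rw [hxv]
      have ha : ext0 (p.1 : S → ℝ) ↑a = (p.1 : S → ℝ) a := by
        simp [hext0, a.2]
      simp only [Pi.add_apply, Pi.smul_apply, smul_eq_mul, ha]
      ring }
  rw [e.finrank_eq, Module.finrank_prod, Module.finrank_self]

theorem coduplicate_vertex_mult_neg_one {V : Type*} [Fintype V] [DecidableEq V]
    (G : SimpleGraph V) (u v : V) (huv : u ≠ v)
    (hdup : insert u (G.neighborSet u) = insert v (G.neighborSet v)) :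
    G.eigMult (-1) = (G.induce {w | w ≠ v}).eigMult (-1) + 1 := by
  classical
  rw [eigMult_eq_aux G (-1), eigMult_eq_aux (G.induce {w | w ≠ v}) (-1)]
  set M : Matrix V V ℝ := G.adjMatrix ℝ - (-1 : ℝ) • 1 with hM
  have hMe : ∀ i j, M i j = (if G.Adj i j then 1 else 0) + (if i = j then 1 else 0) := by
    intro i j
    simp [hM, Matrix.one_apply, sub_eq_add_neg]
  have hadj : ∀ w, (w = u ∨ G.Adj u w) ↔ (w = v ∨ G.Adj v w) := by
    intro w
    have := Set.ext_iff.mp hdup w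
    simpa [Set.mem_insert_iff, SimpleGraph.mem_neighborSet, SimpleGraph.adj_comm, eq_comm] using this
  have hsub : (G.induce {w | w ≠ v}).adjMatrix ℝ - (-1 : ℝ) • 1
      = M.submatrix (Subtype.val : {w : V | w ≠ v} → V) Subtype.val := by
    ext a b
    simp [hM, Matrix.one_apply, Matrix.submatrix_apply, Subtype.ext_iff]
  rw [hsub]
  have hsym : ∀ i j, M i j = M j i := by
    intro i j
    rw [hMe, hMe, SimpleGraph.adj_comm]
    simp [eq_comm]
  have hrow : ∀ w, M u w = M v w := by
    intro w
    rw [hMe, hMe]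
    by_cases h1 : w = u
    · have hne : ¬ w = v := fun h => huv (h1.symm.trans h)
      have hvw : G.Adj v w := ((hadj w).1 (Or.inl h1)).resolve_left hne
      have huw : ¬ G.Adj u w := fun h => G.irrefl (h1 ▸ h)
      have h1' : u = w := h1.symm
      have hne' : ¬ v = w := fun h => hne h.symm
      simp [huw, hvw, h1', hne']
    · by_cases h2 : w = v
      · have hne : ¬ w = u := fun h => huv (h.symm.trans h2)
        have huw : G.Adj u w := ((hadj w).2 (Or.inl h2)).resolve_left hne
        have hvw : ¬ G.Adj v w := fun h => G.irrefl (h2 ▸ h)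
        have h2' : v = w := h2.symm
        have hne' : ¬ u = w := fun h => hne h.symm
        simp [huw, hvw, h2', hne']
      · have hiff : G.Adj u w ↔ G.Adj v w := by
          constructor
          · intro h; exact ((hadj w).1 (Or.inr h)).resolve_left h2
          · intro h; exact ((hadj w).2 (Or.inr h)).resolve_left h1
        have h1' : ¬ u = w := fun h => h1 h.symm
        have h2' : ¬ v = w := fun h => h2 h.symm
        simp [hiff, h1', h2']
  exact finrank_ker_delete M u v huv {w | w ≠ v} (fun w => Iff.rfl) hsym hrow
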